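/- arXiv:2602.00764 — 3 statements merged into one kernel-verified Lean document; each statement's English description precedes it below -/
import Mathlib

section
/- With the t-shuffle product ⧢_t on H_t = Q[t]⟨x,y⟩ defined by 1 ⧢_t w = w ⧢_t 1 = w and aw₁ ⧢_t bw₂ = a(w₁ ⧢_t bw₂) + b(aw₁ ⧢_t w₂) − δ(w₁)ρ(a)bw₂ − δ(w₂)ρ(b)aw₁ (with δ the indicator of the empty word, ρ(x)=0, ρ(y)=tx), the product ⧢_t is associative, so (H_t, ⧢_t) is a commutative Q[t]-algebra. -/
open scoped BigOperators

noncomputable section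

abbrev Rt : Type := Polynomial ℚ
abbrev Ht : Type := MonoidAlgebra Rt (FreeMonoid (Fin 2))

/-- The word `l` as an element of `H_t`. -/
def wd (l : List (Fin 2)) : Ht :=
  MonoidAlgebra.of Rt (FreeMonoid (Fin 2)) (FreeMonoid.ofList l)

/-- The letter `x`. -/
def wx : Ht := wd [0]
/-- The letter `y`. -/
def wy : Ht := wd [1]

/-- ρ(x) = 0, ρ(y) = t·x. -/
def ρt : Fin 2 → Ht := fun a => if a = 1 then (Polynomial.X : Rt) • wx else 0

/-- δ: indicator of the empty word. -/
def δw : List (Fin 2) → Rt := fun w => if w = [] then 1 else 0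

/-- The t-shuffle product on words. -/
def tshW : List (Fin 2) → List (Fin 2) → Ht
  | [], w => wd w
  | a :: w, [] => wd (a :: w)
  | a :: w1, b :: w2 =>
      wd [a] * tshW w1 (b :: w2) + wd [b] * tshW (a :: w1) w2
        - δw w1 • (ρt a * wd (b :: w2)) - δw w2 • (ρt b * wd (a :: w1))
  termination_by w1 w2 => w1.length + w2.length

/-- The ordinary shuffle product (t = 0 case) on words. -/
def shW : List (Fin 2) → List (Fin 2) → Ht
  | [], w => wd w
  | a :: w, [] => wd (a :: w)
  | a :: w1, b :: w2 =>
      wd [a] * shW w1 (b :: w2) + wd [b] * shW (a :: w1) w2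
  termination_by w1 w2 => w1.length + w2.length

/-- The t-shuffle product on `H_t`, extended Q[t]-bilinearly. -/
def tshH (u v : Ht) : Ht :=
  u.coeff.sum fun w1 c1 => v.coeff.sum fun w2 c2 =>
    (c1 * c2) • tshW (FreeMonoid.toList w1) (FreeMonoid.toList w2)

/-- The ordinary shuffle product on `H_t`, extended Q[t]-bilinearly. -/
def shH (u v : Ht) : Ht :=
  u.coeff.sum fun w1 c1 => v.coeff.sum fun w2 c2 =>
    (c1 * c2) • shW (FreeMonoid.toList w1) (FreeMonoid.toList w2)


lemma tshW_nil (w : List (Fin 2)) : tshW [] w = wd w := by rw [tshW]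

lemma tshW_nil' (w : List (Fin 2)) : tshW w [] = wd w := by
  cases w with
  | nil => rw [tshW]
  | cons a w => rw [tshW]

lemma tshW_cons (a b : Fin 2) (w1 w2 : List (Fin 2)) :
    tshW (a :: w1) (b :: w2) =
      wd [a] * tshW w1 (b :: w2) + wd [b] * tshW (a :: w1) w2
        - δw w1 • (ρt a * wd (b :: w2)) - δw w2 • (ρt b * wd (a :: w1)) := by
  rw [tshW]

lemma wd_cons (p : Fin 2) (l : List (Fin 2)) : wd (p :: l) = wd [p] * wd l := by
  simp [wd, ← map_mul]

def tshB : Ht →ₗ[Rt] Ht →ₗ[Rt] Ht :=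
  (Finsupp.lsum Rt fun w1 => LinearMap.toSpanSingleton Rt (Ht →ₗ[Rt] Ht) <|
    (Finsupp.lsum Rt fun w2 =>
      LinearMap.toSpanSingleton Rt Ht (tshW (FreeMonoid.toList w1) (FreeMonoid.toList w2)))
      ∘ₗ (MonoidAlgebra.coeffLinearEquiv Rt).toLinearMap)
    ∘ₗ (MonoidAlgebra.coeffLinearEquiv Rt).toLinearMap

lemma tshB_apply (u v : Ht) : tshB u v = tshH u v := by
  rw [tshB, tshH, LinearMap.comp_apply]
  erw [Finsupp.lsum_apply]
  rw [Finsupp.sum, Finsupp.sum, LinearMap.sum_apply]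
  apply Finset.sum_congr rfl
  intro w1 _
  rw [LinearMap.toSpanSingleton_apply, LinearMap.smul_apply, LinearMap.comp_apply]
  erw [Finsupp.lsum_apply]
  rw [Finsupp.sum, Finsupp.sum, Finset.smul_sum]
  apply Finset.sum_congr rfl
  intro w2 _
  rw [LinearMap.toSpanSingleton_apply, smul_smul]
  rfl

lemma tshH_addl (u u' v : Ht) : tshH (u + u') v = tshH u v + tshH u' v := by
  simp only [← tshB_apply, map_add, LinearMap.add_apply]
lemma tshH_addr (u v v' : Ht) : tshH u (v + v') = tshH u v + tshH u v' := by
  simp only [← tshB_apply, map_add]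
lemma tshH_subl (u u' v : Ht) : tshH (u - u') v = tshH u v - tshH u' v := by
  simp only [← tshB_apply, map_sub, LinearMap.sub_apply]
lemma tshH_subr (u v v' : Ht) : tshH u (v - v') = tshH u v - tshH u v' := by
  simp only [← tshB_apply, map_sub]
lemma tshH_smull (c : Rt) (u v : Ht) : tshH (c • u) v = c • tshH u v := by
  simp only [← tshB_apply, map_smul, LinearMap.smul_apply]
lemma tshH_smulr (c : Rt) (u v : Ht) : tshH u (c • v) = c • tshH u v := by
  simp only [← tshB_apply, map_smul]
lemma tshH_zerol (v : Ht) : tshH 0 v = 0 := by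
  simp only [← tshB_apply, map_zero, LinearMap.zero_apply]
lemma tshH_zeror (u : Ht) : tshH u 0 = 0 := by
  simp only [← tshB_apply, map_zero]

lemma tshH_wd (a b : List (Fin 2)) : tshH (wd a) (wd b) = tshW a b := by
  rw [wd, wd, MonoidAlgebra.of_apply, MonoidAlgebra.of_apply, tshH,
    MonoidAlgebra.coeff_single, MonoidAlgebra.coeff_single]
  rw [Finsupp.sum_single_index, Finsupp.sum_single_index] <;>
    simp [FreeMonoid.toList_ofList]

lemma Ht_induction {P : Ht → Prop} (h0 : P 0)
    (hadd : ∀ u v : Ht, P u → P v → P (u + v))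
    (hsingle : ∀ (w : FreeMonoid (Fin 2)) (c : Rt), P (MonoidAlgebra.single w c)) (u : Ht) : P u :=
  MonoidAlgebra.induction_linear u h0 hadd hsingle

def eps (u : Ht) : Rt := u.coeff (FreeMonoid.ofList [])

lemma eps_add (u v : Ht) : eps (u + v) = eps u + eps v :=
  Finsupp.add_apply u.coeff v.coeff _
lemma eps_smul (c : Rt) (u : Ht) : eps (c • u) = c * eps u := by
  simp only [eps]
  rw [MonoidAlgebra.coeff_smul, Finsupp.smul_apply, smul_eq_mul]
lemma eps_zero : eps (0 : Ht) = 0 := rfl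

lemma eps_wd (l : List (Fin 2)) : eps (wd l) = δw l := by
  cases l with
  | nil =>
      rw [eps, wd, MonoidAlgebra.of_apply, FreeMonoid.ofList_nil, δw, if_pos rfl]
      exact Finsupp.single_eq_same
  | cons a l =>
      rw [eps, wd, MonoidAlgebra.of_apply, δw, if_neg (by simp), FreeMonoid.ofList_nil]
      exact Finsupp.single_eq_of_ne' (by
        intro h
        exact absurd (congrArg FreeMonoid.toList h) (by simp [FreeMonoid.toList_one]))

lemma smul_wd (w : FreeMonoid (Fin 2)) (c : Rt) :
    c • wd (FreeMonoid.toList w) = MonoidAlgebra.single w c := by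
  rw [wd, MonoidAlgebra.of_apply, FreeMonoid.ofList_toList, MonoidAlgebra.smul_single, smul_eq_mul,
    mul_one]

lemma eps_mul_letter (p : Fin 2) (u : Ht) : eps (wd [p] * u) = 0 := by
  induction u using Ht_induction with
  | h0 => rw [mul_zero, eps_zero]
  | hadd f g hf hg => rw [mul_add, eps_add, hf, hg, add_zero]
  | hsingle w c =>
      rw [← smul_wd, mul_smul_comm, eps_smul, ← wd_cons, eps_wd]
      simp [δw]

lemma eps_rho (p : Fin 2) (u : Ht) : eps (ρt p * u) = 0 := by
  by_cases h : p = 1 <;>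
    simp [ρt, h, smul_mul_assoc, eps_smul, eps_zero, eps_mul_letter, wx, zero_mul]

lemma tshH_onel (v : Ht) : tshH (wd []) v = v := by
  induction v using Ht_induction with
  | h0 => exact tshH_zeror _
  | hadd f g hf hg => rw [tshH_addr, hf, hg]
  | hsingle w c => rw [← smul_wd, tshH_smulr, tshH_wd, tshW_nil, smul_wd]

lemma tshH_oner (u : Ht) : tshH u (wd []) = u := by
  induction u using Ht_induction with
  | h0 => exact tshH_zerol _
  | hadd f g hf hg => rw [tshH_addl, hf, hg]
  | hsingle w c => rw [← smul_wd, tshH_smull, tshH_wd, tshW_nil', smul_wd]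

lemma G (p r : Fin 2) (u v : Ht) :
    tshH (wd [p] * u) (wd [r] * v) =
      wd [p] * tshH u (wd [r] * v) + wd [r] * tshH (wd [p] * u) v
        - eps u • (ρt p * (wd [r] * v)) - eps v • (ρt r * (wd [p] * u)) := by
  induction u using Ht_induction with
  | h0 => simp [tshH_zerol, eps_zero, mul_zero]
  | hadd f g hf hg =>
      simp only [mul_add, tshH_addl, eps_add, add_smul, smul_add] at *
      rw [hf, hg]; abel
  | hsingle w1 c1 =>
      induction v using Ht_induction with
      | h0 => simp [tshH_zeror, eps_zero, mul_zero]
      | hadd f g hf hg =>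
          simp only [mul_add, tshH_addr, eps_add, add_smul, smul_add] at *
          rw [hf, hg]; abel
      | hsingle w2 c2 =>
          rw [← smul_wd w1 c1, ← smul_wd w2 c2]
          simp only [mul_smul_comm, tshH_smull, tshH_smulr, eps_smul, eps_wd,
            ← wd_cons, tshH_wd, smul_smul]
          rw [tshW_cons]
          simp only [smul_sub, smul_add, smul_smul]
          module

lemma rho_zero : ρt 0 = 0 := by simp [ρt]

lemma rho_one : ρt 1 = (Polynomial.X : Rt) • wd [0] := by simp [ρt, wx]

lemma eps_sub (u v : Ht) : eps (u - v) = eps u - eps v :=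
  Finsupp.sub_apply u.coeff v.coeff _

lemma Gl (p r : Fin 2) (u v : Ht) :
    tshH (ρt p * u) (wd [r] * v) =
      ρt p * tshH u (wd [r] * v) + wd [r] * tshH (ρt p * u) v
        - eps v • (ρt r * (ρt p * u)) := by
  by_cases h : p = 1
  · subst h
    rw [rho_one]
    simp only [smul_mul_assoc, tshH_smull, mul_smul_comm, smul_sub, smul_add, smul_smul]
    rw [G 0 r u v]
    simp only [rho_zero, zero_mul, smul_zero, sub_zero, smul_sub, smul_add, smul_smul,
      mul_smul_comm, smul_comm]
    module
  · have h0 : ρt p = 0 := by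
      simp [ρt, h]
    simp [h0, tshH_zerol]

lemma Gr (p r : Fin 2) (u v : Ht) :
    tshH (wd [p] * u) (ρt r * v) =
      wd [p] * tshH u (ρt r * v) + ρt r * tshH (wd [p] * u) v
        - eps u • (ρt p * (ρt r * v)) := by
  by_cases h : r = 1
  · subst h
    rw [rho_one]
    simp only [smul_mul_assoc, tshH_smulr, mul_smul_comm, smul_sub, smul_add, smul_smul]
    rw [G p 0 u v]
    simp only [rho_zero, zero_mul, smul_zero, sub_zero, smul_sub, smul_add, smul_smul,
      mul_smul_comm, smul_comm]
    module
  · have h0 : ρt r = 0 := by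
      simp [ρt, h]
    simp [h0, tshH_zeror]

lemma eps_tshW (a b : List (Fin 2)) : eps (tshW a b) = δw a * δw b := by
  match a, b with
  | [], b => rw [tshW_nil, eps_wd]; simp [δw]
  | a :: as, [] => rw [tshW_nil', eps_wd]; simp [δw]
  | a :: as, b :: bs =>
      rw [tshW_cons, eps_sub, eps_sub, eps_add, eps_smul, eps_smul, eps_mul_letter,
        eps_mul_letter, eps_rho, eps_rho]
      simp [δw]

lemma Gw (p r : Fin 2) (u : Ht) (c : List (Fin 2)) :
    tshH (wd [p] * u) (wd (r :: c)) =
      wd [p] * tshH u (wd (r :: c)) + wd [r] * tshH (wd [p] * u) (wd c)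
        - eps u • (ρt p * wd (r :: c)) - δw c • (ρt r * (wd [p] * u)) := by
  rw [wd_cons r c, G, eps_wd]

lemma Glw (p r : Fin 2) (u : Ht) (c : List (Fin 2)) :
    tshH (ρt p * u) (wd (r :: c)) =
      ρt p * tshH u (wd (r :: c)) + wd [r] * tshH (ρt p * u) (wd c)
        - δw c • (ρt r * (ρt p * u)) := by
  rw [wd_cons r c, Gl, eps_wd]

lemma Gw' (p r : Fin 2) (a : List (Fin 2)) (v : Ht) :
    tshH (wd (p :: a)) (wd [r] * v) =
      wd [p] * tshH (wd a) (wd [r] * v) + wd [r] * tshH (wd (p :: a)) v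
        - δw a • (ρt p * (wd [r] * v)) - eps v • (ρt r * wd (p :: a)) := by
  rw [wd_cons p a, G, eps_wd]

lemma Grw' (p r : Fin 2) (a : List (Fin 2)) (v : Ht) :
    tshH (wd (p :: a)) (ρt r * v) =
      wd [p] * tshH (wd a) (ρt r * v) + ρt r * tshH (wd (p :: a)) v
        - δw a • (ρt p * (ρt r * v)) := by
  rw [wd_cons p a, Gr, eps_wd]

lemma lhs_expand (p q r : Fin 2) (a b c : List (Fin 2)) :
    tshH (tshW (p :: a) (q :: b)) (wd (r :: c)) =
      wd [p] * tshH (tshW a (q :: b)) (wd (r :: c))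
      + wd [q] * tshH (tshW (p :: a) b) (wd (r :: c))
      + wd [r] * tshH (tshW (p :: a) (q :: b)) (wd c)
      - δw a • (ρt p * tshW (q :: b) (r :: c))
      - δw b • (ρt q * tshW (p :: a) (r :: c))
      - δw c • (ρt r * tshW (p :: a) (q :: b)) := by
  have epsU : eps (tshW a (q :: b)) = 0 := by rw [eps_tshW]; simp [δw]
  have epsV : eps (tshW (p :: a) b) = 0 := by rw [eps_tshW]; simp [δw]
  rw [tshW_cons p q a b]
  simp only [tshH_subl, tshH_addl, tshH_smull]
  rw [Gw p r (tshW a (q :: b)) c, Gw q r (tshW (p :: a) b) c,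
    Glw p r (wd (q :: b)) c, Glw q r (wd (p :: a)) c,
    tshH_wd (q :: b) (r :: c), tshH_wd (p :: a) (r :: c)]
  simp only [epsU, epsV, zero_smul, sub_zero, mul_add, mul_sub, mul_smul_comm,
    smul_sub, smul_add, smul_smul]
  module

lemma rhs_expand (p q r : Fin 2) (a b c : List (Fin 2)) :
    tshH (wd (p :: a)) (tshW (q :: b) (r :: c)) =
      wd [p] * tshH (wd a) (tshW (q :: b) (r :: c))
      + wd [q] * tshH (wd (p :: a)) (tshW b (r :: c))
      + wd [r] * tshH (wd (p :: a)) (tshW (q :: b) c)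
      - δw a • (ρt p * tshW (q :: b) (r :: c))
      - δw b • (ρt q * tshW (p :: a) (r :: c))
      - δw c • (ρt r * tshW (p :: a) (q :: b)) := by
  have epsW : eps (tshW b (r :: c)) = 0 := by rw [eps_tshW]; simp [δw]
  have epsW' : eps (tshW (q :: b) c) = 0 := by rw [eps_tshW]; simp [δw]
  rw [tshW_cons q r b c]
  simp only [tshH_subr, tshH_addr, tshH_smulr]
  rw [Gw' p q a (tshW b (r :: c)), Gw' p r a (tshW (q :: b) c),
    Grw' p q a (wd (r :: c)), Grw' p r a (wd (q :: b)),
    tshH_wd (p :: a) (r :: c), tshH_wd (p :: a) (q :: b)]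
  simp only [epsW, epsW', zero_smul, sub_zero, mul_add, mul_sub, mul_smul_comm,
    smul_sub, smul_add, smul_smul]
  module

lemma wassoc : ∀ (n : ℕ) (a b c : List (Fin 2)), a.length + b.length + c.length = n →
    tshH (tshW a b) (wd c) = tshH (wd a) (tshW b c) := by
  intro n
  induction n using Nat.strong_induction_on with
  | _ n IH =>
    intro a b c hl
    match a, b, c with
    | [], b, c => rw [tshW_nil, tshH_wd, tshH_onel]
    | a :: as, [], c => rw [tshW_nil', tshW_nil, tshH_wd]
    | a :: as, b :: bs, [] => rw [tshH_oner, tshW_nil', tshH_wd]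
    | p :: a, q :: b, r :: c =>
      rw [lhs_expand, rhs_expand]
      have IH1 : tshH (tshW a (q :: b)) (wd (r :: c)) = tshH (wd a) (tshW (q :: b) (r :: c)) :=
        IH _ (by simp only [List.length_cons] at hl ⊢; omega) a (q :: b) (r :: c) rfl
      have IH2 : tshH (tshW (p :: a) b) (wd (r :: c)) = tshH (wd (p :: a)) (tshW b (r :: c)) :=
        IH _ (by simp only [List.length_cons] at hl ⊢; omega) (p :: a) b (r :: c) rfl
      have IH3 : tshH (tshW (p :: a) (q :: b)) (wd c) = tshH (wd (p :: a)) (tshW (q :: b) c) :=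
        IH _ (by simp only [List.length_cons] at hl ⊢; omega) (p :: a) (q :: b) c rfl
      rw [IH1, IH2, IH3]

/-- The t-shuffle product is associative (so `(H_t, ⧢_t)` is a commutative Q[t]-algebra). -/
theorem tshuffle_assoc (u v w : Ht) : tshH (tshH u v) w = tshH u (tshH v w) := by
  induction u using Ht_induction with
  | h0 => simp only [tshH_zerol]
  | hadd f g hf hg => simp only [tshH_addl, tshH_addr, hf, hg]
  | hsingle w1 c1 =>
    induction v using Ht_induction with
    | h0 => simp only [tshH_zerol, tshH_zeror]
    | hadd f g hf hg => simp only [tshH_addl, tshH_addr, hf, hg]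
    | hsingle w2 c2 =>
      induction w using Ht_induction with
      | h0 => simp only [tshH_zeror]
      | hadd f g hf hg => simp only [tshH_addl, tshH_addr, hf, hg]
      | hsingle w3 c3 =>
        rw [← smul_wd w1 c1, ← smul_wd w2 c2, ← smul_wd w3 c3]
        simp only [tshH_smull, tshH_smulr, tshH_wd]
        rw [wassoc _ (FreeMonoid.toList w1) (FreeMonoid.toList w2) (FreeMonoid.toList w3) rfl]
end
end

section
/- For any even positive integer k, Σ_{j=0}^{k} (−1)^j ζ(j+2) ζ(k−j+2) = 2 ζ*(k+3, 1), where ζ*(a, b) = Σ_{m ≥ n ≥ 1} 1/(m^a n^b) is the double zeta-star value. -/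
open scoped BigOperators

noncomputable section

/-- The Riemann zeta value `ζ(s) = Σ_{n ≥ 1} 1/n^s`. -/
def zeta (s : ℕ) : ℝ := ∑' n : ℕ, 1 / ((n : ℝ) + 1) ^ s

/-- The double zeta-star value `ζ*(a,b) = Σ_{m ≥ n ≥ 1} 1/(m^a n^b)`. -/
def zetaStar (a b : ℕ) : ℝ :=
  ∑' p : {q : ℕ × ℕ // q.2 ≤ q.1}, 1 / (((p.1.1 : ℝ) + 1) ^ a * ((p.1.2 : ℝ) + 1) ^ b)

/-- The double zeta value `ζ(a,b) = Σ_{m > n ≥ 1} 1/(m^a n^b)`. -/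
def dzeta (a b : ℕ) : ℝ :=
  ∑' p : {q : ℕ × ℕ // q.2 < q.1}, 1 / (((p.1.1 : ℝ) + 1) ^ a * ((p.1.2 : ℝ) + 1) ^ b)

lemma summable_base : Summable (fun n : ℕ => 1/((n:ℝ)+1)^2) := by
  have := Real.summable_one_div_nat_pow.mpr (le_refl 2)
  have h := (summable_nat_add_iff 1).mpr this
  simpa using h

lemma summable_pow {s : ℕ} (hs : 2 ≤ s) : Summable (fun n : ℕ => 1/((n:ℝ)+1)^s) := by
  apply Summable.of_nonneg_of_le (fun n => by positivity) _ summable_base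
  intro n
  apply one_div_le_one_div_of_le (by positivity)
  have h1 : (1:ℝ) ≤ (n:ℝ)+1 := by linarith [(Nat.cast_nonneg n : (0:ℝ) ≤ (n:ℝ))]
  exact pow_le_pow_right₀ h1 hs

lemma pointwise (k : ℕ) (hk : Even k) (M N : ℝ) (hM : 0 < M) (hN : 0 < N) :
    ∑ j ∈ Finset.range (k+1), (-1:ℝ)^j * (1/M^(j+2)) * (1/N^(k-j+2))
      = 1/(M * N^(k+2) * (M+N)) + 1/(M^(k+2) * N * (M+N)) := by
  have hMN : (0:ℝ) < M + N := by linarith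
  have hM0 : M ≠ 0 := ne_of_gt hM
  have hN0 : N ≠ 0 := ne_of_gt hN
  have hMN0 : M + N ≠ 0 := ne_of_gt hMN
  have key : (∑ j ∈ Finset.range (k+1), (-1:ℝ)^j * N^j * M^(k-j)) * (M + N)
      = M^(k+1) + N^(k+1) := by
    have h := geom_sum₂_mul (-N) M (k+1)
    have hodd : Odd (k+1) := Even.add_one hk
    simp only [Nat.add_sub_cancel] at h
    have h2 : ∑ i ∈ Finset.range (k+1), (-N)^i * M^(k-i)
        = ∑ j ∈ Finset.range (k+1), (-1:ℝ)^j * N^j * M^(k-j) :=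
      Finset.sum_congr rfl fun i _ => by rw [neg_pow]
    rw [h2, hodd.neg_pow] at h
    linear_combination -h
  have step : ∑ j ∈ Finset.range (k+1), (-1:ℝ)^j * (1/M^(j+2)) * (1/N^(k-j+2))
      = (∑ j ∈ Finset.range (k+1), (-1:ℝ)^j * N^j * M^(k-j)) / (M^(k+2) * N^(k+2)) := by
    rw [Finset.sum_div]
    apply Finset.sum_congr rfl
    intro j hj
    have hjk : j ≤ k := Nat.lt_succ_iff.mp (Finset.mem_range.mp hj)
    have e1 : M^(k+2) = M^(j+2) * M^(k-j) := by rw [← pow_add]; congr 1; omega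
    have e2 : N^(k+2) = N^(k-j+2) * N^j := by rw [← pow_add]; congr 1; omega
    rw [e1, e2]
    field_simp
  have hS : (∑ j ∈ Finset.range (k+1), (-1:ℝ)^j * N^j * M^(k-j))
      = (M^(k+1) + N^(k+1)) / (M+N) := by
    rw [eq_div_iff hMN0]; exact key
  rw [step, hS]
  field_simp
  ring

lemma tele (c : ℕ) : HasSum (fun n : ℕ => 1/((n:ℝ)+(c:ℝ)+1) - 1/((n:ℝ)+(c:ℝ)+2)) (1/((c:ℝ)+1)) := by
  have hc : (0:ℝ) ≤ (c:ℝ) := Nat.cast_nonneg c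
  have hnn : ∀ i : ℕ, 0 ≤ 1/((i:ℝ)+(c:ℝ)+1) - 1/((i:ℝ)+(c:ℝ)+2) := by
    intro i
    have hi : (0:ℝ) ≤ (i:ℝ) := Nat.cast_nonneg i
    have h1 : (0:ℝ) < (i:ℝ)+(c:ℝ)+1 := by linarith
    have := one_div_le_one_div_of_le h1 (by linarith : (i:ℝ)+(c:ℝ)+1 ≤ (i:ℝ)+(c:ℝ)+2)
    linarith
  rw [hasSum_iff_tendsto_nat_of_nonneg hnn]
  have hps : ∀ n : ℕ, ∑ i ∈ Finset.range n, (1/((i:ℝ)+(c:ℝ)+1) - 1/((i:ℝ)+(c:ℝ)+2))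
      = 1/((c:ℝ)+1) - 1/((n:ℝ)+(c:ℝ)+1) := by
    intro n
    have h := Finset.sum_range_sub' (fun i : ℕ => 1/((i:ℝ)+(c:ℝ)+1)) n
    push_cast at h
    rw [show (0:ℝ) + (c:ℝ) + 1 = (c:ℝ) + 1 by ring] at h
    rw [← h]
    apply Finset.sum_congr rfl
    intro i _
    ring_nf
  simp only [hps]
  have h1 : Filter.Tendsto (fun n : ℕ => (n:ℝ)+(c:ℝ)+1) Filter.atTop Filter.atTop := by
    apply Filter.tendsto_atTop_add_const_right
    apply Filter.tendsto_atTop_add_const_right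
    exact tendsto_natCast_atTop_atTop
  have h2 := h1.inv_tendsto_atTop
  have h3 := Filter.Tendsto.sub (tendsto_const_nhds (x := 1/((c:ℝ)+1)) (f := Filter.atTop)) h2
  simpa [one_div] using h3

lemma harm (m : ℕ) : HasSum (fun n : ℕ => 1/((n:ℝ)+1) - 1/((n:ℝ)+(m:ℝ)+2))
    (∑ i ∈ Finset.range (m+1), 1/((i:ℝ)+1)) := by
  induction m with
  | zero => simpa using tele 0
  | succ m ih =>
      have h := ih.add (tele (m+1))
      have hf : (fun n : ℕ => (1/((n:ℝ)+1) - 1/((n:ℝ)+(m:ℝ)+2))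
            + (1/((n:ℝ)+((m+1:ℕ):ℝ)+1) - 1/((n:ℝ)+((m+1:ℕ):ℝ)+2)))
          = fun n : ℕ => 1/((n:ℝ)+1) - 1/((n:ℝ)+((m+1:ℕ):ℝ)+2) := by
        funext n
        have hn : (0:ℝ) ≤ (n:ℝ) := Nat.cast_nonneg n
        have hm : (0:ℝ) ≤ (m:ℝ) := Nat.cast_nonneg m
        push_cast
        have e : (n:ℝ)+((m:ℝ)+1)+1 = (n:ℝ)+(m:ℝ)+2 := by ring
        rw [e]
        ring
      rw [hf] at h
      rw [Finset.sum_range_succ]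
      exact h

lemma fiber (a m : ℕ) : HasSum
    (fun n : ℕ => 1/(((m:ℝ)+1)^(a+2) * ((n:ℝ)+1) * (((m:ℝ)+1) + ((n:ℝ)+1))))
    (1/((m:ℝ)+1)^(a+3) * ∑ i ∈ Finset.range (m+1), 1/((i:ℝ)+1)) := by
  have h := (harm m).mul_left (1/((m:ℝ)+1)^(a+3))
  have hf : (fun n : ℕ => 1/((m:ℝ)+1)^(a+3) * (1/((n:ℝ)+1) - 1/((n:ℝ)+(m:ℝ)+2)))
      = fun n : ℕ => 1/(((m:ℝ)+1)^(a+2) * ((n:ℝ)+1) * (((m:ℝ)+1) + ((n:ℝ)+1))) := by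
    funext n
    have hm : (0:ℝ) ≤ (m:ℝ) := Nat.cast_nonneg m
    have hn : (0:ℝ) ≤ (n:ℝ) := Nat.cast_nonneg n
    have hM : ((m:ℝ)+1) ≠ 0 := by linarith
    have hN : ((n:ℝ)+1) ≠ 0 := by linarith
    have hNM : ((n:ℝ)+(m:ℝ)+2) ≠ 0 := by linarith
    have e : ((m:ℝ)+1) + ((n:ℝ)+1) = (n:ℝ)+(m:ℝ)+2 := by ring
    rw [e]
    rw [show (a+3) = (a+2)+1 by ring, pow_succ]
    field_simp
    ring
  rw [hf] at h
  exact h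

lemma hH (m : ℕ) : ∑ i ∈ Finset.range (m+1), 1/((i:ℝ)+1) ≤ (m:ℝ)+1 := by
  calc ∑ i ∈ Finset.range (m+1), 1/((i:ℝ)+1) ≤ ∑ _i ∈ Finset.range (m+1), (1:ℝ) := by
        apply Finset.sum_le_sum
        intro i _
        have hi : (0:ℝ) ≤ (i:ℝ) := Nat.cast_nonneg i
        rw [div_le_one (by linarith)]
        linarith
    _ = (m:ℝ)+1 := by simp

lemma hHpos (m : ℕ) : 0 ≤ ∑ i ∈ Finset.range (m+1), 1/((i:ℝ)+1) := by
  apply Finset.sum_nonneg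
  intro i _
  positivity

lemma summable_rows (a : ℕ) :
    Summable (fun m : ℕ => 1/((m:ℝ)+1)^(a+3) * ∑ i ∈ Finset.range (m+1), 1/((i:ℝ)+1)) := by
  apply Summable.of_nonneg_of_le (fun m => by positivity) _ (summable_pow (s := a+2) (by omega))
  intro m
  have hm : (0:ℝ) ≤ (m:ℝ) := Nat.cast_nonneg m
  have h1 : 1/((m:ℝ)+1)^(a+3) * ∑ i ∈ Finset.range (m+1), 1/((i:ℝ)+1)
      ≤ 1/((m:ℝ)+1)^(a+3) * ((m:ℝ)+1) := by
    apply mul_le_mul_of_nonneg_left (hH m) (by positivity)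
  have h2 : 1/((m:ℝ)+1)^(a+3) * ((m:ℝ)+1) = 1/((m:ℝ)+1)^(a+2) := by
    rw [show (a+3) = (a+2)+1 by ring, pow_succ]
    have hM : ((m:ℝ)+1) ≠ 0 := by linarith
    field_simp
  linarith

def eqv : (Σ m : ℕ, Fin (m+1)) ≃ {q : ℕ × ℕ // q.2 ≤ q.1} where
  toFun x := ⟨(x.1, x.2), Nat.le_of_lt_succ x.2.isLt⟩
  invFun q := ⟨q.1.1, ⟨q.1.2, Nat.lt_succ_of_le q.2⟩⟩
  left_inv x := rfl
  right_inv q := rfl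

lemma zetaStar_eq (a : ℕ) : zetaStar (a+3) 1
    = ∑' m : ℕ, (1/((m:ℝ)+1)^(a+3) * ∑ i ∈ Finset.range (m+1), 1/((i:ℝ)+1)) := by
  have hsum : ∀ m : ℕ, ∑ i : Fin (m+1), 1/(((m:ℝ)+1)^(a+3) * (((i:ℕ):ℝ)+1)^1)
      = 1/((m:ℝ)+1)^(a+3) * ∑ i ∈ Finset.range (m+1), 1/((i:ℝ)+1) := by
    intro m
    rw [Fin.sum_univ_eq_sum_range (fun i : ℕ => 1/(((m:ℝ)+1)^(a+3) * ((i:ℝ)+1)^1))]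
    rw [Finset.mul_sum]
    apply Finset.sum_congr rfl
    intro i _
    rw [pow_one, ← one_div_mul_one_div]
  set F : (Σ m : ℕ, Fin (m+1)) → ℝ :=
    fun x => 1/(((x.1:ℝ)+1)^(a+3) * (((x.2:ℕ):ℝ)+1)^1) with hF
  have hfib : ∀ m : ℕ, ∑' i : Fin (m+1), F ⟨m, i⟩
      = 1/((m:ℝ)+1)^(a+3) * ∑ i ∈ Finset.range (m+1), 1/((i:ℝ)+1) := by
    intro m
    rw [tsum_fintype]
    exact hsum m
  have hsummable : Summable F := by
    rw [summable_sigma_of_nonneg (fun x => by positivity)]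
    refine ⟨fun m => (hasSum_fintype _).summable, ?_⟩
    have : (fun m : ℕ => ∑' i : Fin (m+1), F ⟨m, i⟩)
        = fun m : ℕ => 1/((m:ℝ)+1)^(a+3) * ∑ i ∈ Finset.range (m+1), 1/((i:ℝ)+1) :=
      funext hfib
    rw [this]
    exact summable_rows a
  have h1 : zetaStar (a+3) 1 = ∑' x, F x := by
    rw [zetaStar, ← eqv.tsum_eq]
    rfl
  rw [h1, Summable.tsum_sigma' (fun m => (hasSum_fintype _).summable) hsummable]
  exact tsum_congr hfib

lemma Gsummable (a : ℕ) : Summable (fun p : ℕ × ℕ =>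
    1/(((p.1:ℝ)+1)^(a+2) * ((p.2:ℝ)+1) * (((p.1:ℝ)+1) + ((p.2:ℝ)+1)))) := by
  have hbound := summable_base.mul_of_nonneg summable_base
    (fun n => by positivity) (fun n => by positivity)
  apply Summable.of_nonneg_of_le (fun p => by positivity) _ hbound
  intro p
  have hm : (0:ℝ) ≤ (p.1:ℝ) := Nat.cast_nonneg _
  have hn : (0:ℝ) ≤ (p.2:ℝ) := Nat.cast_nonneg _
  set M := (p.1:ℝ)+1 with hMdef
  set N := (p.2:ℝ)+1 with hNdef
  have hM1 : (1:ℝ) ≤ M := by simp [hMdef]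
  have hN1 : (1:ℝ) ≤ N := by simp [hNdef]
  have h1 : M^2 ≤ M^(a+2) := pow_le_pow_right₀ hM1 (by omega)
  have h2 : N^2 ≤ N * (M+N) := by nlinarith
  have h3 : M^2*N^2 ≤ M^(a+2) * (N*(M+N)) :=
    mul_le_mul h1 h2 (by positivity) (by positivity)
  calc 1/(M^(a+2)*N*(M+N)) = 1/(M^(a+2)*(N*(M+N))) := by ring_nf
    _ ≤ 1/(M^2*N^2) := one_div_le_one_div_of_le (by positivity) h3
    _ = 1/M^2 * (1/N^2) := by rw [← one_div_mul_one_div]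

lemma Gtsum (a : ℕ) : (∑' p : ℕ × ℕ,
      1/(((p.1:ℝ)+1)^(a+2) * ((p.2:ℝ)+1) * (((p.1:ℝ)+1) + ((p.2:ℝ)+1))))
    = zetaStar (a+3) 1 := by
  rw [Summable.tsum_prod' (Gsummable a) (fun m => (fiber a m).summable)]
  rw [zetaStar_eq]
  exact tsum_congr fun m => (fiber a m).tsum_eq

/-- For even positive `k`, `Σ_{j=0}^{k} (−1)^j ζ(j+2) ζ(k−j+2) = 2 ζ*(k+3, 1)`. -/
theorem alt_zeta_sum_even (k : ℕ) (hk : Even k) (hk0 : 0 < k) :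
    ∑ j ∈ Finset.range (k + 1), (-1 : ℝ) ^ j * zeta (j + 2) * zeta (k - j + 2) =
      2 * zetaStar (k + 3) 1 := by
  have hGswap : ∀ p : ℕ × ℕ,
      1/(((p.2:ℝ)+1) * ((p.1:ℝ)+1)^(k+2) * (((p.2:ℝ)+1) + ((p.1:ℝ)+1)))
        = 1/(((p.1:ℝ)+1)^(k+2) * ((p.2:ℝ)+1) * (((p.1:ℝ)+1) + ((p.2:ℝ)+1))) := by
    intro p; ring_nf
  have hG'sum : Summable (fun p : ℕ × ℕ =>
      1/(((p.1:ℝ)+1) * ((p.2:ℝ)+1)^(k+2) * (((p.1:ℝ)+1) + ((p.2:ℝ)+1)))) := by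
    have h : Summable (fun p : ℕ × ℕ =>
        1/(((p.2:ℝ)+1) * ((p.1:ℝ)+1)^(k+2) * (((p.2:ℝ)+1) + ((p.1:ℝ)+1)))) :=
      (Gsummable k).congr (fun p => (hGswap p).symm)
    exact (Equiv.prodComm ℕ ℕ).summable_iff.mp h
  have hG'tsum : (∑' p : ℕ × ℕ,
        1/(((p.1:ℝ)+1) * ((p.2:ℝ)+1)^(k+2) * (((p.1:ℝ)+1) + ((p.2:ℝ)+1))))
      = ∑' p : ℕ × ℕ,
        1/(((p.1:ℝ)+1)^(k+2) * ((p.2:ℝ)+1) * (((p.1:ℝ)+1) + ((p.2:ℝ)+1))) := by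
    rw [← (Equiv.prodComm ℕ ℕ).tsum_eq (fun p : ℕ × ℕ =>
        1/(((p.1:ℝ)+1) * ((p.2:ℝ)+1)^(k+2) * (((p.1:ℝ)+1) + ((p.2:ℝ)+1))))]
    exact tsum_congr fun p => hGswap p
  have hnorm : ∀ s : ℕ, 2 ≤ s → Summable (fun n : ℕ => ‖1/((n:ℝ)+1)^s‖) := by
    intro s hs
    apply (summable_pow hs).congr
    intro n
    exact (Real.norm_of_nonneg (by positivity)).symm
  have hsummand : ∀ j ∈ Finset.range (k+1), Summable (fun p : ℕ × ℕ =>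
      (-1:ℝ)^j * (1/((p.1:ℝ)+1)^(j+2) * (1/((p.2:ℝ)+1)^(k-j+2)))) := by
    intro j hj
    have h := (summable_pow (s := j+2) (by omega)).mul_of_nonneg
      (summable_pow (s := k-j+2) (by omega))
      (fun n => by positivity) (fun n => by positivity)
    exact h.mul_left _
  have h1 : ∀ j ∈ Finset.range (k+1),
      (-1:ℝ)^j * zeta (j+2) * zeta (k-j+2)
        = ∑' p : ℕ × ℕ, (-1:ℝ)^j * (1/((p.1:ℝ)+1)^(j+2) * (1/((p.2:ℝ)+1)^(k-j+2))) := by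
    intro j hj
    rw [mul_assoc, zeta, zeta,
      tsum_mul_tsum_of_summable_norm (hnorm _ (by omega)) (hnorm _ (by omega)),
      tsum_mul_left]
  rw [Finset.sum_congr rfl h1, ← Summable.tsum_finsetSum hsummand]
  have h2 : ∀ p : ℕ × ℕ, ∑ j ∈ Finset.range (k+1),
      (-1:ℝ)^j * (1/((p.1:ℝ)+1)^(j+2) * (1/((p.2:ℝ)+1)^(k-j+2)))
      = 1/(((p.1:ℝ)+1) * ((p.2:ℝ)+1)^(k+2) * (((p.1:ℝ)+1) + ((p.2:ℝ)+1)))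
        + 1/(((p.1:ℝ)+1)^(k+2) * ((p.2:ℝ)+1) * (((p.1:ℝ)+1) + ((p.2:ℝ)+1))) := by
    intro p
    have hm : (0:ℝ) ≤ (p.1:ℝ) := Nat.cast_nonneg _
    have hn : (0:ℝ) ≤ (p.2:ℝ) := Nat.cast_nonneg _
    have h := pointwise k hk ((p.1:ℝ)+1) ((p.2:ℝ)+1) (by linarith) (by linarith)
    simp only [mul_assoc] at h ⊢
    exact h
  rw [tsum_congr h2, Summable.tsum_add hG'sum (Gsummable k), hG'tsum, Gtsum k]
  ring
end
end

section
/- For any odd integer k ≥ 3, ζ*(k−1, 1) = ((k+1)/2) ζ(k) − Σ_{2 ≤ j ≤ k−2, j odd} ζ(j) ζ(k−j), where ζ*(a,b) = Σ_{m≥n≥1} m^{−a} n^{−b}. -/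
open scoped BigOperators

noncomputable section

namespace ZetaAux

open Filter Topology

lemma zsummable {s : ℕ} (hs : 2 ≤ s) : Summable (fun n : ℕ => 1 / ((n : ℝ) + 1) ^ s) := by
  have h := (Real.summable_one_div_nat_pow (p := s)).2 (by omega)
  have h2 := (summable_nat_add_iff (f := fun n : ℕ => 1 / (n : ℝ) ^ s) 1).2 h
  refine h2.congr fun n => ?_
  push_cast
  ring_nf

lemma rsummable : Summable (fun n : ℕ => 1 / ((n : ℝ) + 1) ^ (3/2 : ℝ)) := by
  have h := (Real.summable_one_div_nat_rpow (p := (3/2 : ℝ))).2 (by norm_num)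
  have h2 := (summable_nat_add_iff (f := fun n : ℕ => 1 / (n : ℝ) ^ (3/2 : ℝ)) 1).2 h
  refine h2.congr fun n => ?_
  push_cast
  ring_nf

def e1 : ℕ × ℕ ≃ {q : ℕ × ℕ // q.2 < q.1} where
  toFun p := ⟨(p.2 + p.1 + 1, p.2), by omega⟩
  invFun q := (q.1.1 - q.1.2 - 1, q.1.2)
  left_inv p := by
    obtain ⟨d, n⟩ := p
    simp only [Prod.mk.injEq]
    exact ⟨by omega, trivial⟩
  right_inv q := by
    obtain ⟨⟨m, n⟩, h⟩ := q
    have h' : n < m := h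
    simp only [Subtype.mk.injEq, Prod.mk.injEq]
    exact ⟨by omega, trivial⟩

def eD : ℕ ≃ {q : ℕ × ℕ // q.1 = q.2} where
  toFun n := ⟨(n, n), rfl⟩
  invFun q := q.1.1
  left_inv n := rfl
  right_inv q := by
    obtain ⟨⟨m, n⟩, h⟩ := q
    have h' : m = n := h
    subst h'
    rfl


-- majorant
lemma msummable : Summable (fun n : ℕ => 1 / (((n:ℝ)+1) * Real.sqrt ((n:ℝ)+1))) := by
  refine rsummable.congr fun n => ?_
  congr 1
  rw [show (3/2 : ℝ) = 1 + 1/2 by norm_num, Real.rpow_add (by positivity), Real.rpow_one,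
    ← Real.sqrt_eq_rpow]

lemma maj_summable : Summable (fun p : ℕ × ℕ =>
    (1 / (((p.1:ℝ)+1) * Real.sqrt ((p.1:ℝ)+1))) * (1 / (((p.2:ℝ)+1) * Real.sqrt ((p.2:ℝ)+1)))) :=
  msummable.mul_of_nonneg msummable (fun n => by positivity) (fun n => by positivity)

lemma key_ineq {a b : ℕ} (ha : 2 ≤ a) (hb : 1 ≤ b) (d n : ℕ) :
    (((d:ℝ)+1) * Real.sqrt ((d:ℝ)+1)) * ((((n:ℝ)+1) * Real.sqrt ((n:ℝ)+1)))
      ≤ ((n:ℝ)+(d:ℝ)+2) ^ a * ((n:ℝ)+1) ^ b := by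
  set x : ℝ := (d:ℝ)+1 with hx
  set y : ℝ := (n:ℝ)+1 with hy
  have hx1 : (1:ℝ) ≤ x := by simp [hx]
  have hy1 : (1:ℝ) ≤ y := by simp [hy]
  have hM : ((n:ℝ)+(d:ℝ)+2) = x + y := by rw [hx, hy]; ring
  rw [hM]
  have hM1 : (1:ℝ) ≤ x + y := by linarith
  have h1 : (x+y)^2 * y ≤ (x+y)^a * y^b := by
    have := pow_le_pow_right₀ hM1 ha
    have := le_self_pow₀ hy1 (by omega : b ≠ 0)
    exact mul_le_mul ‹(x+y)^2 ≤ (x+y)^a› ‹y ≤ y^b› (by linarith) (by positivity)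
  refine le_trans ?_ h1
  have hs : Real.sqrt x * Real.sqrt y ≤ x + y := by
    rw [← Real.sqrt_mul (by linarith)]
    have h2 : x * y ≤ (x+y)^2 := by nlinarith
    calc Real.sqrt (x*y) ≤ Real.sqrt ((x+y)^2) := Real.sqrt_le_sqrt h2
    _ = x + y := Real.sqrt_sq (by linarith)
  have hxs : (0:ℝ) ≤ Real.sqrt x := Real.sqrt_nonneg _
  have hys : (0:ℝ) ≤ Real.sqrt y := Real.sqrt_nonneg _
  calc x * Real.sqrt x * (y * Real.sqrt y) = (x*y) * (Real.sqrt x * Real.sqrt y) := by ring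
  _ ≤ (x*y) * (x+y) := by
      refine mul_le_mul_of_nonneg_left hs (by positivity)
  _ ≤ (x+y)^2 * y := by
      have hexp : (x+y)^2 * y = x*y*(x+y) + y*y*(x+y) := by ring
      nlinarith [mul_nonneg (mul_nonneg (by linarith : (0:ℝ) ≤ y) (by linarith : (0:ℝ) ≤ y)) (by linarith : (0:ℝ) ≤ x+y)]

lemma hasSum_zeta {s : ℕ} (hs : 2 ≤ s) : HasSum (fun n : ℕ => 1/((n:ℝ)+1)^s) (zeta s) :=
  (zsummable hs).hasSum

-- summability of the F-parametrized double zeta terms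
lemma summable_F {a b : ℕ} (ha : 2 ≤ a) (hb : 1 ≤ b) :
    Summable (fun p : ℕ × ℕ => 1 / (((p.2:ℝ)+(p.1:ℝ)+2) ^ a * ((p.2:ℝ)+1) ^ b)) := by
  refine maj_summable.of_nonneg_of_le (fun p => by positivity) fun p => ?_
  rw [div_mul_div_comm, one_mul]
  refine one_div_le_one_div_of_le (by positivity) (key_ineq ha hb p.1 p.2)

lemma summable_dz {a b : ℕ} (ha : 2 ≤ a) (hb : 1 ≤ b) :
    Summable (fun q : {q : ℕ × ℕ // q.2 < q.1} =>
      1 / (((q.1.1 : ℝ) + 1) ^ a * ((q.1.2 : ℝ) + 1) ^ b)) := by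
  refine e1.summable_iff.mp ?_
  refine (summable_F ha hb).congr fun p => ?_
  obtain ⟨d, n⟩ := p
  show 1 / (((n:ℝ)+(d:ℝ)+2) ^ a * ((n:ℝ)+1) ^ b)
      = 1 / ((((n + d + 1 : ℕ) : ℝ) + 1) ^ a * (((n : ℕ) : ℝ) + 1) ^ b)
  push_cast
  ring_nf

lemma hasSum_dz {a b : ℕ} (ha : 2 ≤ a) (hb : 1 ≤ b) :
    HasSum (fun q : {q : ℕ × ℕ // q.2 < q.1} =>
      1 / (((q.1.1 : ℝ) + 1) ^ a * ((q.1.2 : ℝ) + 1) ^ b)) (dzeta a b) :=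
  (summable_dz ha hb).hasSum

lemma hasSum_F {a b : ℕ} (ha : 2 ≤ a) (hb : 1 ≤ b) :
    HasSum (fun p : ℕ × ℕ => 1 / (((p.2:ℝ)+(p.1:ℝ)+2) ^ a * ((p.2:ℝ)+1) ^ b)) (dzeta a b) := by
  have h := (e1.hasSum_iff (f := fun q : {q : ℕ × ℕ // q.2 < q.1} =>
      1 / (((q.1.1 : ℝ) + 1) ^ a * ((q.1.2 : ℝ) + 1) ^ b))).mpr (hasSum_dz ha hb)
  refine HasSum.congr_fun h fun p => ?_
  obtain ⟨d, n⟩ := p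
  show 1 / (((n:ℝ)+(d:ℝ)+2) ^ a * ((n:ℝ)+1) ^ b)
      = 1 / ((((n + d + 1 : ℕ) : ℝ) + 1) ^ a * (((n : ℕ) : ℝ) + 1) ^ b)
  push_cast
  ring_nf

def esw : {q : ℕ × ℕ // q.2 < q.1} ≃ {q : ℕ × ℕ // q.1 < q.2} where
  toFun q := ⟨q.1.swap, q.2⟩
  invFun q := ⟨q.1.swap, q.2⟩
  left_inv q := by ext <;> rfl
  right_inv q := by ext <;> rfl

lemma summable_prod_zeta {a b : ℕ} (ha : 2 ≤ a) (hb : 2 ≤ b) :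
    Summable (fun p : ℕ × ℕ => 1 / (((p.1:ℝ)+1)^a * ((p.2:ℝ)+1)^b)) := by
  have h := (zsummable ha).mul_of_nonneg (zsummable hb)
    (fun n => by positivity) (fun n => by positivity)
  refine h.congr fun p => ?_
  rw [div_mul_div_comm, one_mul]

lemma stuffle {a b : ℕ} (ha : 2 ≤ a) (hb : 2 ≤ b) :
    zeta a * zeta b = dzeta a b + dzeta b a + zeta (a + b) := by
  set f : ℕ × ℕ → ℝ := fun p => 1 / (((p.1:ℝ)+1)^a * ((p.2:ℝ)+1)^b) with hf
  have hmul : HasSum f (zeta a * zeta b) := by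
    have h := (hasSum_zeta ha).mul (hasSum_zeta hb) (by
      have := summable_prod_zeta ha hb
      refine this.congr fun p => ?_
      rw [div_mul_div_comm, one_mul])
    refine h.congr_fun fun p => ?_
    rw [hf]
    simp only
    rw [div_mul_div_comm, one_mul]
  have hlt : HasSum (f ∘ (↑) : {q : ℕ × ℕ | q.2 < q.1} → ℝ) (dzeta a b) := hasSum_dz ha (by omega)
  have hgt : HasSum (f ∘ (↑) : {q : ℕ × ℕ | q.1 < q.2} → ℝ) (dzeta b a) := by
    refine (esw.hasSum_iff (f := (f ∘ (↑) : {q : ℕ × ℕ | q.1 < q.2} → ℝ))).mp ?_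
    refine (hasSum_dz hb (by omega)).congr_fun fun q => ?_
    obtain ⟨⟨m, n⟩, h⟩ := q
    show 1 / (((n:ℝ)+1)^a * ((m:ℝ)+1)^b) = 1 / (((m:ℝ)+1)^b * ((n:ℝ)+1)^a)
    ring_nf
  have hdg : HasSum (f ∘ (↑) : {q : ℕ × ℕ | q.1 = q.2} → ℝ) (zeta (a + b)) := by
    refine (eD.hasSum_iff (f := (f ∘ (↑) : {q : ℕ × ℕ | q.1 = q.2} → ℝ))).mp ?_
    refine (hasSum_zeta (by omega : 2 ≤ a + b)).congr_fun fun n => ?_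
    show 1 / (((n:ℝ)+1)^a * ((n:ℝ)+1)^b) = 1 / ((n:ℝ)+1)^(a+b)
    rw [pow_add]
  have hd1 : Disjoint {q : ℕ × ℕ | q.1 < q.2} {q : ℕ × ℕ | q.1 = q.2} := by
    rw [Set.disjoint_left]
    rintro ⟨m, n⟩ h1 h2
    simp only [Set.mem_setOf_eq] at h1 h2
    omega
  have h2 := hgt.add_disjoint hd1 hdg
  have hcompl : ({q : ℕ × ℕ | q.2 < q.1})ᶜ = {q : ℕ × ℕ | q.1 < q.2} ∪ {q : ℕ × ℕ | q.1 = q.2} := by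
    ext ⟨m, n⟩
    simp only [Set.mem_compl_iff, Set.mem_setOf_eq, Set.mem_union]
    omega
  rw [← hcompl] at h2
  have h3 := hlt.add_compl h2
  rw [hmul.unique h3]
  ring

lemma sum_shift (g : ℕ → ℝ) (D m : ℕ) :
    ∑ i ∈ Finset.range (D + m), g i = ∑ i ∈ Finset.range D, g i + ∑ i ∈ Finset.range m, g (D + i) := by
  rw [← Finset.sum_range_add_sum_Ico g (Nat.le_add_right D m)]
  congr 1
  rw [Finset.sum_Ico_eq_sum_range, Nat.add_sub_cancel_left]

lemma tele (n : ℕ) : HasSum (fun d : ℕ => 1/(((d:ℝ)+1) * ((d:ℝ)+(n:ℝ)+2)))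
    ((∑ i ∈ Finset.range (n+1), 1/((i:ℝ)+1)) / ((n:ℝ)+1)) := by
  set g : ℕ → ℝ := fun i => 1/((i:ℝ)+1) with hg
  have key : HasSum (fun d : ℕ => g d - g (n + 1 + d)) (∑ i ∈ Finset.range (n+1), g i) := by
    have hnn : ∀ d : ℕ, 0 ≤ g d - g (n + 1 + d) := by
      intro d
      rw [sub_nonneg, hg]
      simp only
      refine one_div_le_one_div_of_le (by positivity) ?_
      push_cast
      linarith
    rw [hasSum_iff_tendsto_nat_of_nonneg hnn]
    have hps : ∀ D : ℕ, ∑ d ∈ Finset.range D, (g d - g (n + 1 + d))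
        = ∑ i ∈ Finset.range (n+1), g i - ∑ i ∈ Finset.range (n+1), g (D + i) := by
      intro D
      rw [Finset.sum_sub_distrib]
      have h1 : ∑ d ∈ Finset.range D, g (n + 1 + d)
          = ∑ i ∈ Finset.range ((n+1) + D), g i - ∑ i ∈ Finset.range (n+1), g i := by
        rw [sum_shift g (n+1) D]; ring
      have h2 : ∑ i ∈ Finset.range ((n+1) + D), g i
          = ∑ i ∈ Finset.range D, g i + ∑ i ∈ Finset.range (n+1), g (D + i) := by
        rw [show (n+1) + D = D + (n+1) by omega, sum_shift g D (n+1)]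
      rw [h1, h2]
      ring
    simp only [hps]
    have htail : Tendsto (fun D : ℕ => ∑ i ∈ Finset.range (n+1), g (D + i)) atTop (𝓝 0) := by
      have : (0:ℝ) = ∑ i ∈ Finset.range (n+1), (0:ℝ) := by simp
      rw [this]
      refine tendsto_finset_sum _ fun i _ => ?_
      have hb : Tendsto (fun D : ℕ => ((D:ℝ) + ((i:ℝ)+1))) atTop atTop :=
        tendsto_atTop_add_const_right _ _ tendsto_natCast_atTop_atTop
      have := hb.inv_tendsto_atTop
      refine this.congr fun D => ?_
      rw [hg]
      simp only [Pi.inv_apply]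
      push_cast
      rw [one_div]
      ring_nf
    simpa using tendsto_const_nhds.sub htail
  have h2 := key.mul_left (1/((n:ℝ)+1))
  have h3 : (1/((n:ℝ)+1)) * ∑ i ∈ Finset.range (n+1), g i
      = (∑ i ∈ Finset.range (n+1), 1/((i:ℝ)+1)) / ((n:ℝ)+1) := by
    rw [hg]; ring
  rw [h3] at h2
  refine h2.congr_fun fun d => ?_
  rw [hg]
  simp only
  have hd : ((d:ℝ)+1) ≠ 0 := by positivity
  have hdn : ((d:ℝ)+(n:ℝ)+2) ≠ 0 := by positivity
  have hn : ((n:ℝ)+1) ≠ 0 := by positivity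
  field_simp
  push_cast
  ring

lemma geom_pf : ∀ k : ℕ, 3 ≤ k → ∀ M N : ℝ, 0 < N → N < M →
    ∑ a ∈ Finset.Icc 2 (k-1), 1/(M^a * N^(k-a))
      = 1/((M-N) * (M * N^(k-2))) - 1/((M-N) * M^(k-1)) := by
  intro k hk
  induction k, hk using Nat.le_induction with
  | base =>
    intro M N hN hNM
    have hM : (0:ℝ) < M := lt_trans hN hNM
    have hMN : M - N ≠ 0 := sub_ne_zero.mpr hNM.ne'
    norm_num
    field_simp
  | succ k hk ih =>
    intro M N hN hNM
    have hM : (0:ℝ) < M := lt_trans hN hNM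
    have hMN : M - N ≠ 0 := sub_ne_zero.mpr hNM.ne'
    have IH := ih M N hN hNM
    obtain ⟨e, rfl⟩ : ∃ e, k = e + 2 := ⟨k - 2, by omega⟩
    simp only [show e+2-1 = e+1 from by omega, show e+2-2 = e from by omega] at IH
    simp only [show e+2+1-1 = e+2 from by omega, show e+2+1-2 = e+1 from by omega]
    have hsplit := Finset.sum_Icc_succ_top (f := fun a => 1/(M^a * N^(e+2+1-a)))
      (by omega : 2 ≤ (e+1) + 1)
    rw [show (e+1)+1 = e+2 from rfl] at hsplit
    rw [hsplit]
    have hterm : ∀ a ∈ Finset.Icc 2 (e+1), 1/(M^a * N^(e+2+1-a))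
        = (1/N) * (1/(M^a * N^(e+2-a))) := by
      intro a ha
      simp only [Finset.mem_Icc] at ha
      rw [show e+2+1-a = (e+2-a)+1 from by omega, pow_succ]
      field_simp
    rw [Finset.sum_congr rfl hterm, ← Finset.mul_sum, IH,
      show e+2+1-(e+2) = 1 from by omega]
    field_simp
    ring

lemma hasSum_zetaStar {a b : ℕ} (ha : 2 ≤ a) (hb : 1 ≤ b) :
    HasSum (fun q : {q : ℕ × ℕ // q.2 ≤ q.1} =>
      1 / (((q.1.1 : ℝ) + 1) ^ a * ((q.1.2 : ℝ) + 1) ^ b))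
      (dzeta a b + zeta (a+b)) := by
  set f : ℕ × ℕ → ℝ := fun p => 1 / (((p.1:ℝ)+1)^a * ((p.2:ℝ)+1)^b) with hf
  have hlt : HasSum (f ∘ (↑) : {q : ℕ × ℕ | q.2 < q.1} → ℝ) (dzeta a b) := hasSum_dz ha hb
  have hdg : HasSum (f ∘ (↑) : {q : ℕ × ℕ | q.1 = q.2} → ℝ) (zeta (a + b)) := by
    refine (eD.hasSum_iff (f := (f ∘ (↑) : {q : ℕ × ℕ | q.1 = q.2} → ℝ))).mp ?_
    refine (hasSum_zeta (by omega : 2 ≤ a + b)).congr_fun fun n => ?_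
    show 1 / (((n:ℝ)+1)^a * ((n:ℝ)+1)^b) = 1 / ((n:ℝ)+1)^(a+b)
    rw [pow_add]
  have hd1 : Disjoint {q : ℕ × ℕ | q.2 < q.1} {q : ℕ × ℕ | q.1 = q.2} := by
    rw [Set.disjoint_left]
    rintro ⟨m, n⟩ h1 h2
    simp only [Set.mem_setOf_eq] at h1 h2
    omega
  have h2 := hlt.add_disjoint hd1 hdg
  have hle : {q : ℕ × ℕ | q.2 < q.1} ∪ {q : ℕ × ℕ | q.1 = q.2} = {q : ℕ × ℕ | q.2 ≤ q.1} := by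
    ext ⟨m, n⟩
    simp only [Set.mem_union, Set.mem_setOf_eq]
    omega
  rw [hle] at h2
  exact h2

lemma zetaStar_eq {a b : ℕ} (ha : 2 ≤ a) (hb : 1 ≤ b) :
    zetaStar a b = dzeta a b + zeta (a+b) :=
  (hasSum_zetaStar ha hb).tsum_eq

def eSig : (Σ m : ℕ, Fin (m+1)) ≃ {q : ℕ × ℕ // q.2 ≤ q.1} where
  toFun x := ⟨(x.1, x.2.1), Nat.lt_succ_iff.mp x.2.2⟩
  invFun q := ⟨q.1.1, ⟨q.1.2, Nat.lt_succ_of_le q.2⟩⟩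
  left_inv x := by obtain ⟨m, ⟨i, hi⟩⟩ := x; rfl
  right_inv q := by obtain ⟨⟨m, n⟩, h⟩ := q; rfl

lemma sum_theorem {k : ℕ} (hk : 3 ≤ k) :
    ∑ a ∈ Finset.Icc 2 (k-1), dzeta a (k-a) = zeta k := by
  classical
  set G1 : ℕ × ℕ → ℝ :=
    fun p => 1 / (((p.1:ℝ)+1) * ((((p.2:ℝ)+(p.1:ℝ)+2)) * ((p.2:ℝ)+1)^(k-2))) with hG1
  set G2 : ℕ × ℕ → ℝ :=
    fun p => 1 / (((p.1:ℝ)+1) * ((p.2:ℝ)+(p.1:ℝ)+2)^(k-1)) with hG2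
  set hh : ℕ → ℝ :=
    fun n => (∑ i ∈ Finset.range (n+1), 1/((i:ℝ)+1)) / ((n:ℝ)+1)^(k-1) with hhh
  -- Step 2 : HasSum G2 (dzeta (k-1) 1)
  have hG2sum : HasSum G2 (dzeta (k-1) 1) := by
    have h0 := hasSum_F (a := k-1) (b := 1) (by omega) le_rfl
    have h1 := (Equiv.prodComm ℕ ℕ).hasSum_iff
      (f := fun p : ℕ × ℕ => 1 / (((p.2:ℝ)+(p.1:ℝ)+2) ^ (k-1) * ((p.2:ℝ)+1) ^ 1))
      (a := dzeta (k-1) 1) |>.mpr h0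
    refine h1.congr_fun fun p => ?_
    obtain ⟨d, n⟩ := p
    show G2 (d, n) = 1 / (((d:ℝ)+(n:ℝ)+2) ^ (k-1) * ((d:ℝ)+1) ^ 1)
    rw [hG2]
    simp only [pow_one]
    rw [show (d:ℝ)+(n:ℝ)+2 = (n:ℝ)+(d:ℝ)+2 from by ring, mul_comm]
  -- Step 3 : fiberwise sums of G1
  have hfiber : ∀ n : ℕ, HasSum (fun d => G1 (d, n)) (hh n) := by
    intro n
    have h0 := (tele n).mul_left (1/((n:ℝ)+1)^(k-2))
    have hval : (1/((n:ℝ)+1)^(k-2)) * ((∑ i ∈ Finset.range (n+1), 1/((i:ℝ)+1)) / ((n:ℝ)+1))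
        = hh n := by
      rw [hhh]
      simp only
      rw [show k-1 = (k-2)+1 from by omega, pow_succ]
      field_simp
      try ring
    rw [hval] at h0
    refine h0.congr_fun fun d => ?_
    show G1 (d, n) = (1/((n:ℝ)+1)^(k-2)) * (1/(((d:ℝ)+1) * ((d:ℝ)+(n:ℝ)+2)))
    rw [hG1]
    simp only
    rw [div_mul_div_comm, one_mul]
    congr 1
    ring
  -- Step 4/5 : HasSum hh (dzeta (k-1) 1 + zeta k)
  have hstar := hasSum_zetaStar (a := k-1) (b := 1) (by omega) le_rfl
  rw [show (k-1)+1 = k from by omega] at hstar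
  have hsig := (eSig.hasSum_iff).mpr hstar
  have hsigfib : ∀ m : ℕ, HasSum
      (fun i : Fin (m+1) => (fun q : {q : ℕ × ℕ // q.2 ≤ q.1} =>
        1 / (((q.1.1 : ℝ) + 1) ^ (k-1) * ((q.1.2 : ℝ) + 1) ^ 1)) (eSig ⟨m, i⟩)) (hh m) := by
    intro m
    have h0 := hasSum_fintype (fun i : Fin (m+1) =>
      1 / (((m : ℝ) + 1) ^ (k-1) * ((i.1 : ℝ) + 1) ^ 1))
    have hval : ∑ i : Fin (m+1), 1 / (((m : ℝ) + 1) ^ (k-1) * ((i.1 : ℝ) + 1) ^ 1) = hh m := by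
      rw [Fin.sum_univ_eq_sum_range (fun i => 1 / (((m : ℝ) + 1) ^ (k-1) * ((i : ℝ) + 1) ^ 1)),
        hhh]
      simp only [pow_one]
      rw [Finset.sum_div]
      refine Finset.sum_congr rfl fun i _ => ?_
      rw [div_div]
      congr 1
      ring
    rw [hval] at h0
    exact h0
  have hhsum : HasSum hh (dzeta (k-1) 1 + zeta k) := hsig.sigma hsigfib
  -- Step 6 : HasSum G1 (dzeta (k-1) 1 + zeta k)
  have hG1s : Summable (fun p : ℕ × ℕ => G1 (p.2, p.1)) := by
    refine (summable_prod_of_nonneg ?_).mpr ⟨fun n => (hfiber n).summable, ?_⟩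
    · intro p
      rw [hG1]
      positivity
    · refine hhsum.summable.congr fun n => ?_
      exact ((hfiber n).tsum_eq).symm
  have hG1sum : HasSum G1 (dzeta (k-1) 1 + zeta k) := by
    have h0 := hG1s.hasSum
    have h1 : HasSum hh (∑' p : ℕ × ℕ, G1 (p.2, p.1)) :=
      h0.prod_fiberwise fun n => hfiber n
    rw [h1.unique hhsum] at h0
    exact (Equiv.prodComm ℕ ℕ).hasSum_iff.mp h0
  -- Step 7 : combine
  have hFa : HasSum (fun p : ℕ × ℕ => ∑ a ∈ Finset.Icc 2 (k-1),
      1 / (((p.2:ℝ)+(p.1:ℝ)+2) ^ a * ((p.2:ℝ)+1) ^ (k-a)))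
      (∑ a ∈ Finset.Icc 2 (k-1), dzeta a (k-a)) := by
    refine hasSum_sum fun a ha => ?_
    simp only [Finset.mem_Icc] at ha
    exact hasSum_F (by omega) (by omega)
  have hsub : HasSum (fun p : ℕ × ℕ => G1 p - G2 p) (∑ a ∈ Finset.Icc 2 (k-1), dzeta a (k-a)) := by
    refine hFa.congr_fun fun p => ?_
    obtain ⟨d, n⟩ := p
    have hN : (0:ℝ) < (n:ℝ)+1 := by positivity
    have hNM : ((n:ℝ)+1) < ((n:ℝ)+(d:ℝ)+2) := by
      have : (0:ℝ) ≤ (d:ℝ) := Nat.cast_nonneg d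
      linarith
    have h0 := geom_pf k hk ((n:ℝ)+(d:ℝ)+2) ((n:ℝ)+1) hN hNM
    have hMN : ((n:ℝ)+(d:ℝ)+2) - ((n:ℝ)+1) = (d:ℝ)+1 := by ring
    rw [hMN] at h0
    exact h0.symm
  have hfinal := hG1sum.sub hG2sum
  have := hsub.unique hfinal
  rw [this]
  ring


end ZetaAux

open ZetaAux in
/-- For odd `k ≥ 3`, `ζ*(k−1,1) = ((k+1)/2) ζ(k) − Σ_{2 ≤ j ≤ k−2, j odd} ζ(j) ζ(k−j)`. -/
theorem zetaStar_formula_odd (k : ℕ) (hk : Odd k) (h3 : 3 ≤ k) :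
    zetaStar (k - 1) 1 =
      ((k : ℝ) + 1) / 2 * zeta k -
        ∑ j ∈ (Finset.Icc 2 (k - 2)).filter (fun j => Odd j), zeta j * zeta (k - j) := by
  classical
  have hZ := sum_theorem h3
  have hsplit : ∑ a ∈ Finset.Icc 2 (k-1), dzeta a (k-a)
      = (∑ a ∈ Finset.Icc 2 (k-2), dzeta a (k-a)) + dzeta (k-1) 1 := by
    have h0 := Finset.sum_Icc_succ_top (f := fun a => dzeta a (k-a))
      (by omega : 2 ≤ (k-2) + 1)
    rw [show (k-2)+1 = k-1 from by omega] at h0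
    rw [h0, show k-(k-1) = 1 from by omega]
  have hsdj : ∑ a ∈ Finset.Icc 2 (k-2), dzeta a (k-a) = zeta k - dzeta (k-1) 1 := by
    rw [← hZ, hsplit]; ring
  have hrefl : ∑ j ∈ Finset.Icc 2 (k-2), dzeta (k-j) j
      = ∑ j ∈ Finset.Icc 2 (k-2), dzeta j (k-j) := by
    refine Finset.sum_nbij' (i := fun j => k - j) (j := fun j => k - j) ?_ ?_ ?_ ?_ ?_
    · intro a ha; simp only [Finset.mem_Icc] at ha ⊢; omega
    · intro a ha; simp only [Finset.mem_Icc] at ha ⊢; omega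
    · intro a ha; simp only [Finset.mem_Icc] at ha; show k - (k - a) = a; omega
    · intro a ha; simp only [Finset.mem_Icc] at ha; show k - (k - a) = a; omega
    · intro a ha
      simp only [Finset.mem_Icc] at ha
      rw [show k - (k - a) = a from by omega]
  have hstuff : ∀ j ∈ Finset.Icc 2 (k-2), zeta j * zeta (k-j)
      = dzeta j (k-j) + dzeta (k-j) j + zeta k := by
    intro j hj
    simp only [Finset.mem_Icc] at hj
    have h0 := stuffle (a := j) (b := k - j) (by omega) (by omega)
    rw [show j + (k - j) = k from by omega] at h0
    exact h0
  have hfull : ∑ j ∈ Finset.Icc 2 (k-2), zeta j * zeta (k-j)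
      = (∑ j ∈ Finset.Icc 2 (k-2), dzeta j (k-j))
        + (∑ j ∈ Finset.Icc 2 (k-2), dzeta (k-j) j) + ((k:ℝ) - 3) * zeta k := by
    rw [Finset.sum_congr rfl hstuff, Finset.sum_add_distrib, Finset.sum_add_distrib,
      Finset.sum_const, Nat.card_Icc, show (k-2)+1-2 = k-3 from by omega, nsmul_eq_mul,
      Nat.cast_sub (by omega : 3 ≤ k)]
    norm_num
  have hparity : ∑ j ∈ Finset.Icc 2 (k-2), zeta j * zeta (k-j)
      = 2 * ∑ j ∈ (Finset.Icc 2 (k-2)).filter (fun j => Odd j), zeta j * zeta (k-j) := by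
    rw [← Finset.sum_filter_add_sum_filter_not (Finset.Icc 2 (k-2)) (fun j => Odd j)]
    have heven : ∑ j ∈ (Finset.Icc 2 (k-2)).filter (fun j => ¬ Odd j), zeta j * zeta (k-j)
        = ∑ j ∈ (Finset.Icc 2 (k-2)).filter (fun j => Odd j), zeta j * zeta (k-j) := by
      refine Finset.sum_nbij' (i := fun j => k - j) (j := fun j => k - j) ?_ ?_ ?_ ?_ ?_
      · intro a ha
        simp only [Finset.mem_filter, Finset.mem_Icc, Nat.odd_iff] at ha ⊢
        obtain ⟨hk2⟩ := hk
        omega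
      · intro a ha
        simp only [Finset.mem_filter, Finset.mem_Icc, Nat.odd_iff] at ha ⊢
        obtain ⟨hk2⟩ := hk
        omega
      · intro a ha; simp only [Finset.mem_filter, Finset.mem_Icc] at ha
        show k - (k - a) = a; omega
      · intro a ha; simp only [Finset.mem_filter, Finset.mem_Icc] at ha
        show k - (k - a) = a; omega
      · intro a ha
        simp only [Finset.mem_filter, Finset.mem_Icc] at ha
        rw [show k - (k - a) = a from by omega, mul_comm]
    rw [heven]
    ring
  have hstarval : zetaStar (k-1) 1 = dzeta (k-1) 1 + zeta k := by
    have h0 := zetaStar_eq (a := k-1) (b := 1) (by omega) le_rfl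
    rw [show (k-1)+1 = k from by omega] at h0
    exact h0
  have e1 : ∑ j ∈ Finset.Icc 2 (k-2), zeta j * zeta (k-j)
      = 2 * (zeta k - dzeta (k-1) 1) + ((k:ℝ) - 3) * zeta k := by
    rw [hfull, hrefl, hsdj]; ring
  linear_combination hstarval + (1/2) * e1 - (1/2) * hparity
end
end
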